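/- Let w ∈ W^{2,2}((0, r_0)) with r_0 > 0. Then there is a constant C depending only on r_0 such that ∫₀^{r_0} |w'|² r dr ≤ C (∫₀^{r_0} |w|² r dr)^{1/2} (∫₀^{r_0} |w''|² r dr)^{1/2} + (C/r_0²) ∫₀^{r_0} |w|² r dr. -/

import Mathlib

open MeasureTheory intervalIntegral

set_option maxHeartbeats 1000000

lemma cs_interval {f : ℝ → ℝ} (hf : Continuous f) {a b : ℝ} (hab : a ≤ b) :
    (∫ s in a..b, |f s|)^2 ≤ (b - a) * ∫ s in a..b, (f s)^2 := by
  rcases eq_or_lt_of_le hab with rfl | h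
  · simp
  · have hL : 0 < b - a := by linarith
    set c : ℝ := (∫ s in a..b, |f s|) / (b - a) with hc
    have hI : (∫ s in a..b, |f s|) = c * (b - a) := by rw [hc, div_mul_cancel₀ _ hL.ne']
    have h0 : 0 ≤ ∫ s in a..b, (|f s| - c)^2 :=
      intervalIntegral.integral_nonneg hab (fun u _ => sq_nonneg _)
    have hexp : ∫ s in a..b, (|f s| - c)^2
        = (∫ s in a..b, (f s)^2) - 2*c*(∫ s in a..b, |f s|) + c^2*(b-a) := by
      have hcongr : ∀ s, (|f s| - c)^2 = (f s)^2 - (2*c)*|f s| + c^2 := by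
        intro s; have := sq_abs (f s); ring_nf; nlinarith [sq_abs (f s)]
      rw [intervalIntegral.integral_congr (g := fun s => (f s)^2 - (2*c)*|f s| + c^2)
        (fun s _ => hcongr s)]
      rw [intervalIntegral.integral_add (f := fun s => (f s)^2 - (2*c)*|f s|) (g := fun _ => c^2) (((hf.pow 2).sub ((continuous_const.mul hf.abs))).intervalIntegrable a b) (intervalIntegrable_const),
          intervalIntegral.integral_sub (f := fun s => (f s)^2) (g := fun s => (2*c)*|f s|) ((hf.pow 2).intervalIntegrable a b) ((continuous_const.mul hf.abs).intervalIntegrable a b),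
          intervalIntegral.integral_const_mul, intervalIntegral.integral_const]
      simp [smul_eq_mul]; ring
    nlinarith [h0, hexp, hI, hL]

lemma ptwise {w : ℝ → ℝ} (hw : ContDiff ℝ 2 w) {a b t : ℝ} (hab : a < b)
    (hta : a ≤ t) (htb : t ≤ b) :
    (b - a) * |deriv w t| ≤ |w a| + |w b| + (b - a) * ∫ s in a..b, |deriv (deriv w) s| := by
  have hdw : Differentiable ℝ w := hw.differentiable (by norm_num)
  have hw1 : ContDiff ℝ 1 (deriv w) :=
    (contDiff_succ_iff_deriv.mp (show ContDiff ℝ (1+1) w by exact_mod_cast hw)).2.2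
  have hdw' : Differentiable ℝ (deriv w) := hw1.differentiable (by norm_num)
  have hcw' : Continuous (deriv w) := hdw'.continuous
  have hcw'' : Continuous (deriv (deriv w)) := hw1.continuous_deriv le_rfl
  set M : ℝ := ∫ s in a..b, |deriv (deriv w) s| with hM
  have hM0 : 0 ≤ M :=
    intervalIntegral.integral_nonneg hab.le (fun u _ => abs_nonneg _)
  -- |w'(t) - w'(s)| ≤ M for s ∈ [a,b]
  have hsub : ∀ s, a ≤ s → s ≤ b → |deriv w t - deriv w s| ≤ M := by
    intro s hs1 hs2
    have hftc : deriv w t - deriv w s = (∫ u in s..t, deriv (deriv w) u) := by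
      rw [intervalIntegral.integral_deriv_eq_sub (fun x _ => (hdw' x))
        ((hcw''.intervalIntegrable s t))]
    rw [hftc]
    have h1 : |∫ u in s..t, deriv (deriv w) u| ≤ |(∫ u in s..t, |deriv (deriv w) u|)| := by
      have := intervalIntegral.norm_integral_le_abs_integral_norm
        (a := s) (b := t) (f := fun u => deriv (deriv w) u) (μ := volume)
      simpa [Real.norm_eq_abs] using this
    refine h1.trans ?_
    rcases le_total s t with hst | hst
    · rw [abs_of_nonneg (intervalIntegral.integral_nonneg hst (fun u _ => abs_nonneg _))]
      exact intervalIntegral.integral_mono_interval hs1 hst htb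
        (Filter.Eventually.of_forall fun u => abs_nonneg _)
        (hcw''.abs.intervalIntegrable a b)
    · rw [intervalIntegral.integral_symm, abs_neg,
        abs_of_nonneg (intervalIntegral.integral_nonneg hst (fun u _ => abs_nonneg _))]
      exact intervalIntegral.integral_mono_interval hta hst hs2
        (Filter.Eventually.of_forall fun u => abs_nonneg _)
        (hcw''.abs.intervalIntegrable a b)
  have hkey : (b - a) * deriv w t - (w b - w a)
      = (∫ s in a..b, (deriv w t - deriv w s)) := by
    rw [intervalIntegral.integral_sub (intervalIntegrable_const) (hcw'.intervalIntegrable a b),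
      intervalIntegral.integral_deriv_eq_sub (fun x _ => (hdw x)) (hcw'.intervalIntegrable a b),
      intervalIntegral.integral_const]
    simp [smul_eq_mul]
  have hbnd : |(b - a) * deriv w t - (w b - w a)| ≤ M * (b - a) := by
    rw [hkey]
    have := intervalIntegral.norm_integral_le_of_norm_le_const
      (a := a) (b := b) (C := M) (f := fun s => deriv w t - deriv w s) ?_
    · simpa [Real.norm_eq_abs, abs_of_nonneg (le_of_lt (show (0:ℝ) < b - a by linarith))] using this
    · intro x hx
      rw [Set.uIoc_of_le hab.le] at hx
      exact (by simpa [Real.norm_eq_abs] using hsub x hx.1.le hx.2 : _)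
  have h2 : |(b - a) * deriv w t| ≤ M * (b - a) + |w b - w a| := by
    calc |(b - a) * deriv w t|
        = |((b - a) * deriv w t - (w b - w a)) + (w b - w a)| := by ring_nf
      _ ≤ |(b - a) * deriv w t - (w b - w a)| + |w b - w a| := abs_add_le _ _
      _ ≤ M * (b - a) + |w b - w a| := by linarith [hbnd]
  have h3 : |w b - w a| ≤ |w b| + |w a| := abs_sub _ _
  have h4 : |(b - a) * deriv w t| = (b - a) * |deriv w t| := by
    rw [abs_mul, abs_of_nonneg (le_of_lt (show (0:ℝ) < b - a by linarith))]
  linarith [h2, h3, h4.symm.le]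

lemma key_estimate {w : ℝ → ℝ} (hw : ContDiff ℝ 2 w) {r0 ℓ : ℝ} (hℓ : 0 < ℓ)
    (h3 : 3*ℓ ≤ r0) :
    ∫ t in (0:ℝ)..r0, (deriv w t)^2 * t ≤
      18/ℓ^2 * (∫ t in (0:ℝ)..r0, (w t)^2 * t)
        + 12*ℓ^2 * (∫ t in (0:ℝ)..r0, (deriv (deriv w) t)^2 * t) := by
  have hr0 : 0 < r0 := by linarith
  set m : ℝ := r0 - ℓ with hm
  have hm0 : 0 ≤ m := by simp only [hm]; linarith
  have hmℓ : 0 ≤ m - ℓ := by simp only [hm]; linarith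
  have hcw : Continuous w := hw.continuous
  have hw1 : ContDiff ℝ 1 (deriv w) :=
    (contDiff_succ_iff_deriv.mp (show ContDiff ℝ (1+1) w by exact_mod_cast hw)).2.2
  have hcw' : Continuous (deriv w) := hw1.continuous
  have hcw'' : Continuous (deriv (deriv w)) := hw1.continuous_deriv le_rfl
  set p : ℝ → ℝ := fun s => (w s)^2 * s with hp
  set q : ℝ → ℝ := fun s => (deriv (deriv w) s)^2 * s with hq
  set b1 : ℝ → ℝ := fun s => (deriv w s)^2 * s with hb1
  have hcp : Continuous p := (hcw.pow 2).mul continuous_id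
  have hcq : Continuous q := (hcw''.pow 2).mul continuous_id
  have hcb1 : Continuous b1 := (hcw'.pow 2).mul continuous_id
  set G : ℝ → ℝ := fun x => ∫ s in (0:ℝ)..x, q s with hG
  have hGc : Continuous G :=
    intervalIntegral.continuous_primitive (fun a b => hcq.intervalIntegrable a b) 0
  have hcpl : Continuous fun x : ℝ => p (x+ℓ) := hcp.comp (continuous_add_right ℓ)
  have hGcl : Continuous fun x : ℝ => G (x+ℓ) := hGc.comp (continuous_add_right ℓ)
  set A : ℝ := ∫ t in (0:ℝ)..r0, p t with hA
  set D : ℝ := G r0 with hD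
  have hGdiff : ∀ x y : ℝ, G y - G x = ∫ s in x..y, q s := by
    intro x y
    have h := intervalIntegral.integral_add_adjacent_intervals
      (show IntervalIntegrable q volume 0 x from hcq.intervalIntegrable 0 x)
      (show IntervalIntegrable q volume x y from hcq.intervalIntegrable x y)
    simp only [hG]; linarith [h]
  have hGle : ∀ x y : ℝ, 0 ≤ x → x ≤ y → G x ≤ G y := by
    intro x y hx hxy
    have h := hGdiff x y
    have h2 : 0 ≤ ∫ s in x..y, q s :=
      intervalIntegral.integral_nonneg hxy
        (fun u hu => mul_nonneg (sq_nonneg _) (le_trans hx hu.1))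
    linarith
  have hGnn : ∀ x : ℝ, 0 ≤ x → 0 ≤ G x := by
    intro x hx
    have h0 : G 0 = 0 := by simp [hG]
    have := hGle 0 x le_rfl hx
    linarith
  have hpae : 0 ≤ᶠ[ae (volume.restrict (Set.Ioc (0:ℝ) r0))] p :=
    (ae_restrict_iff' measurableSet_Ioc).mpr
      (Filter.Eventually.of_forall fun x hx => mul_nonneg (sq_nonneg _) hx.1.le)
  have hDnn : 0 ≤ D := hGnn r0 hr0.le
  -- ===================== forward part =====================
  set φ : ℝ → ℝ :=
    fun t => (3*(p t + p (t+ℓ)) + 3*ℓ^3*(G (t+ℓ) - G t)) / ℓ^2 with hφ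
  have hφc : Continuous φ := by
    apply Continuous.div_const
    exact (continuous_const.mul (hcp.add hcpl)).add
      (continuous_const.mul (hGcl.sub hGc))
  have hfwd_pt : ∀ t ∈ Set.Icc (0:ℝ) m, b1 t ≤ φ t := by
    intro t ht
    obtain ⟨ht0, htm⟩ := ht
    have hlt : t < t + ℓ := by linarith
    have hpt := ptwise hw hlt le_rfl hlt.le
    set M : ℝ := ∫ s in t..t+ℓ, |deriv (deriv w) s| with hM
    have hM0 : 0 ≤ M := intervalIntegral.integral_nonneg hlt.le (fun u _ => abs_nonneg _)
    have hpt' : ℓ * |deriv w t| ≤ |w t| + |w (t+ℓ)| + ℓ * M := by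
      calc ℓ * |deriv w t| = (t + ℓ - t) * |deriv w t| := by ring
        _ ≤ |w t| + |w (t+ℓ)| + (t + ℓ - t) * M := hpt
        _ = |w t| + |w (t+ℓ)| + ℓ * M := by ring
    set I2 : ℝ := ∫ s in t..t+ℓ, (deriv (deriv w) s)^2 with hI2
    have hcs : M^2 ≤ ℓ * I2 := by
      have h := cs_interval hcw'' hlt.le
      calc M^2 ≤ (t + ℓ - t) * I2 := h
        _ = ℓ * I2 := by ring
    have hwt : t * I2 ≤ G (t+ℓ) - G t := by
      rw [hGdiff t (t+ℓ), hI2, ← intervalIntegral.integral_const_mul]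
      apply intervalIntegral.integral_mono_on hlt.le
        ((continuous_const.mul (hcw''.pow 2)).intervalIntegrable _ _)
        (hcq.intervalIntegrable _ _)
      intro x hx
      simp only [hq, Pi.mul_apply, Pi.pow_apply]
      nlinarith [sq_nonneg (deriv (deriv w) x), hx.1, ht0]
    have hsq : (ℓ * |deriv w t|)^2 ≤ (|w t| + |w (t+ℓ)| + ℓ * M)^2 :=
      pow_le_pow_left₀ (by positivity) hpt' 2
    have hexp : ℓ^2 * (deriv w t)^2 ≤ 3*((w t)^2 + (w (t+ℓ))^2 + ℓ^2*M^2) := by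
      nlinarith [hsq, sq_abs (w t), sq_abs (w (t+ℓ)), sq_abs (deriv w t),
        sq_nonneg (|w t| - |w (t+ℓ)|), sq_nonneg (|w t| - ℓ*M), sq_nonneg (|w (t+ℓ)| - ℓ*M)]
    have h1 : ℓ^2 * ((deriv w t)^2 * t) ≤ 3*((w t)^2*t + (w (t+ℓ))^2*t + ℓ^2*(t*M^2)) := by
      have := mul_le_mul_of_nonneg_right hexp ht0
      nlinarith [this]
    have h2 : t * M^2 ≤ ℓ * (G (t+ℓ) - G t) := by
      have h2a := mul_le_mul_of_nonneg_left hcs ht0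
      have h2b := mul_le_mul_of_nonneg_left hwt hℓ.le
      have he : t*(ℓ*I2) = ℓ*(t*I2) := by ring
      linarith
    have h3 : (w (t+ℓ))^2*t ≤ (w (t+ℓ))^2*(t+ℓ) := by nlinarith [sq_nonneg (w (t+ℓ))]
    have hnum : ℓ^2 * ((deriv w t)^2 * t)
        ≤ 3*((w t)^2*t + (w (t+ℓ))^2*(t+ℓ)) + 3*ℓ^3*(G (t+ℓ) - G t) := by
      nlinarith [h1, h2, h3, mul_le_mul_of_nonneg_left h2 (by positivity : (0:ℝ) ≤ 3*ℓ^2)]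
    show (deriv w t)^2 * t ≤ (3*(p t + p (t+ℓ)) + 3*ℓ^3*(G (t+ℓ) - G t)) / ℓ^2
    rw [le_div_iff₀ (by positivity : (0:ℝ) < ℓ^2)]
    simp only [hp]
    calc (deriv w t)^2 * t * ℓ^2 = ℓ^2 * ((deriv w t)^2 * t) := by ring
      _ ≤ _ := hnum
  have hfwd : ∫ t in (0:ℝ)..m, b1 t ≤ (3*(A + A) + 3*ℓ^3*(ℓ*D)) / ℓ^2 := by
    have hmono := intervalIntegral.integral_mono_on (μ := volume) hm0
      (hcb1.intervalIntegrable 0 m) (hφc.intervalIntegrable 0 m) hfwd_pt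
    have hsplit : ∫ t in (0:ℝ)..m, φ t
        = (3*((∫ t in (0:ℝ)..m, p t) + (∫ t in (0:ℝ)..m, p (t+ℓ)))
            + 3*ℓ^3*((∫ t in (0:ℝ)..m, G (t+ℓ)) - (∫ t in (0:ℝ)..m, G t))) / ℓ^2 := by
      simp only [hφ]
      rw [intervalIntegral.integral_div]
      congr 1
      rw [intervalIntegral.integral_add (f := fun x => 3 * (p x + p (x + ℓ))) (g := fun x => 3 * ℓ ^ 3 * (G (x + ℓ) - G x))
          ((continuous_const.mul (hcp.add hcpl)).intervalIntegrable _ _)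
          ((continuous_const.mul (hGcl.sub hGc)).intervalIntegrable _ _),
        intervalIntegral.integral_const_mul, intervalIntegral.integral_const_mul,
        intervalIntegral.integral_add (f := p) (g := fun x => p (x + ℓ)) (hcp.intervalIntegrable _ _)
          (hcpl.intervalIntegrable _ _),
        intervalIntegral.integral_sub (f := fun x => G (x + ℓ)) (g := G) (hGcl.intervalIntegrable _ _)
          (hGc.intervalIntegrable _ _)]
    have hS1 : ∫ t in (0:ℝ)..m, p t ≤ A :=
      intervalIntegral.integral_mono_interval le_rfl hm0 (by linarith) hpae
        (hcp.intervalIntegrable 0 r0)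
    have hS2 : ∫ t in (0:ℝ)..m, p (t+ℓ) ≤ A := by
      rw [intervalIntegral.integral_comp_add_right (fun s => p s) ℓ]
      rw [show (0:ℝ) + ℓ = ℓ by ring, show m + ℓ = r0 by simp [hm]]
      exact intervalIntegral.integral_mono_interval (by linarith) (by linarith) le_rfl hpae
        (hcp.intervalIntegrable 0 r0)
    have hS3 : (∫ t in (0:ℝ)..m, G (t+ℓ)) - (∫ t in (0:ℝ)..m, G t) ≤ ℓ * D := by
      rw [intervalIntegral.integral_comp_add_right (fun s => G s) ℓ]
      rw [show (0:ℝ) + ℓ = ℓ by ring, show m + ℓ = r0 by simp [hm]]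
      have e1 : (∫ t in (0:ℝ)..m, G t)
          = (∫ t in (0:ℝ)..ℓ, G t) + ∫ t in ℓ..m, G t :=
        (intervalIntegral.integral_add_adjacent_intervals
          (hGc.intervalIntegrable 0 ℓ) (hGc.intervalIntegrable ℓ m)).symm
      have e2 : (∫ t in ℓ..r0, G t)
          = (∫ t in ℓ..m, G t) + ∫ t in m..r0, G t :=
        (intervalIntegral.integral_add_adjacent_intervals
          (hGc.intervalIntegrable ℓ m) (hGc.intervalIntegrable m r0)).symm
      have e3 : ∫ t in m..r0, G t ≤ ℓ * D := by
        have h := intervalIntegral.integral_mono_on (μ := volume) (show m ≤ r0 by simp only [hm]; linarith)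
          (hGc.intervalIntegrable m r0) (_root_.intervalIntegrable_const (c := D))
          (fun x hx => hGle x r0 (le_trans hm0 hx.1) hx.2)
        rw [intervalIntegral.integral_const, smul_eq_mul] at h
        calc ∫ t in m..r0, G t ≤ (r0 - m) * D := h
          _ = ℓ * D := by simp [hm]
      have e4 : 0 ≤ ∫ t in (0:ℝ)..ℓ, G t :=
        intervalIntegral.integral_nonneg hℓ.le (fun u hu => hGnn u hu.1)
      linarith
    calc ∫ t in (0:ℝ)..m, b1 t ≤ ∫ t in (0:ℝ)..m, φ t := hmono
      _ = _ := hsplit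
      _ ≤ (3*(A + A) + 3*ℓ^3*(ℓ*D)) / ℓ^2 := by
          rw [div_le_div_iff₀ (by positivity) (by positivity)]
          have h5 := mul_le_mul_of_nonneg_left hS3 (show (0:ℝ) ≤ 3*ℓ^3 by positivity)
          nlinarith [hS1, hS2, h5, sq_nonneg ℓ]
  -- ===================== backward part =====================
  have h2ℓm : 2*ℓ ≤ m := by simp only [hm]; linarith
  have hmr : m ≤ r0 := by simp only [hm]; linarith
  have hcpml : Continuous fun x : ℝ => p (x-ℓ) := hcp.comp (continuous_sub_right ℓ)
  have hGcml : Continuous fun x : ℝ => G (x-ℓ) := hGc.comp (continuous_sub_right ℓ)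
  set ψ : ℝ → ℝ :=
    fun t => (3*(3*p (t-ℓ) + p t) + 9*ℓ^3*(G t - G (t-ℓ))) / ℓ^2 with hψ
  have hψc : Continuous ψ := by
    apply Continuous.div_const
    exact (continuous_const.mul ((continuous_const.mul hcpml).add hcp)).add
      (continuous_const.mul (hGc.sub hGcml))
  have hbwd_pt : ∀ t ∈ Set.Icc m r0, b1 t ≤ ψ t := by
    intro t ht
    obtain ⟨htm, htr⟩ := ht
    have ht2ℓ : 2*ℓ ≤ t := le_trans h2ℓm htm
    have ht0 : 0 ≤ t := by linarith
    have hlt : t - ℓ < t := by linarith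
    have ht3 : t ≤ 3*(t-ℓ) := by linarith
    have hpt := ptwise hw hlt hlt.le le_rfl
    set M : ℝ := ∫ s in t-ℓ..t, |deriv (deriv w) s| with hM
    have hM0 : 0 ≤ M := intervalIntegral.integral_nonneg hlt.le (fun u _ => abs_nonneg _)
    have hpt' : ℓ * |deriv w t| ≤ |w (t-ℓ)| + |w t| + ℓ * M := by
      calc ℓ * |deriv w t| = (t - (t - ℓ)) * |deriv w t| := by ring
        _ ≤ |w (t-ℓ)| + |w t| + (t - (t - ℓ)) * M := hpt
        _ = |w (t-ℓ)| + |w t| + ℓ * M := by ring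
    set I2 : ℝ := ∫ s in t-ℓ..t, (deriv (deriv w) s)^2 with hI2
    have hcs : M^2 ≤ ℓ * I2 := by
      have h := cs_interval hcw'' hlt.le
      calc M^2 ≤ (t - (t - ℓ)) * I2 := h
        _ = ℓ * I2 := by ring
    have hwt : t * I2 ≤ 3*(G t - G (t-ℓ)) := by
      rw [hGdiff (t-ℓ) t, hI2, ← intervalIntegral.integral_const_mul,
        ← intervalIntegral.integral_const_mul]
      apply intervalIntegral.integral_mono_on (μ := volume) hlt.le
        ((continuous_const.mul (hcw''.pow 2)).intervalIntegrable _ _)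
        ((continuous_const.mul hcq).intervalIntegrable _ _)
      intro x hx
      simp only [hq, Pi.mul_apply, Pi.pow_apply]
      nlinarith [sq_nonneg (deriv (deriv w) x), hx.1, ht3]
    have hsq : (ℓ * |deriv w t|)^2 ≤ (|w (t-ℓ)| + |w t| + ℓ * M)^2 :=
      pow_le_pow_left₀ (by positivity) hpt' 2
    have hexp : ℓ^2 * (deriv w t)^2 ≤ 3*((w (t-ℓ))^2 + (w t)^2 + ℓ^2*M^2) := by
      nlinarith [hsq, sq_abs (w t), sq_abs (w (t-ℓ)), sq_abs (deriv w t),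
        sq_nonneg (|w (t-ℓ)| - |w t|), sq_nonneg (|w (t-ℓ)| - ℓ*M), sq_nonneg (|w t| - ℓ*M)]
    have h1 : ℓ^2 * ((deriv w t)^2 * t) ≤ 3*((w (t-ℓ))^2*t + (w t)^2*t + ℓ^2*(t*M^2)) := by
      have := mul_le_mul_of_nonneg_right hexp ht0
      nlinarith [this]
    have h2 : t * M^2 ≤ 3*ℓ * (G t - G (t-ℓ)) := by
      have h2a := mul_le_mul_of_nonneg_left hcs ht0
      have h2b := mul_le_mul_of_nonneg_left hwt hℓ.le
      have he : t*(ℓ*I2) = ℓ*(t*I2) := by ring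
      linarith
    have h3 : (w (t-ℓ))^2*t ≤ 3*((w (t-ℓ))^2*(t-ℓ)) := by
      nlinarith [sq_nonneg (w (t-ℓ))]
    have hnum : ℓ^2 * ((deriv w t)^2 * t)
        ≤ 3*(3*((w (t-ℓ))^2*(t-ℓ)) + (w t)^2*t) + 9*ℓ^3*(G t - G (t-ℓ)) := by
      nlinarith [h1, h2, h3, mul_le_mul_of_nonneg_left h2 (by positivity : (0:ℝ) ≤ 3*ℓ^2)]
    show (deriv w t)^2 * t ≤ (3*(3*p (t-ℓ) + p t) + 9*ℓ^3*(G t - G (t-ℓ))) / ℓ^2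
    rw [le_div_iff₀ (by positivity : (0:ℝ) < ℓ^2)]
    simp only [hp]
    calc (deriv w t)^2 * t * ℓ^2 = ℓ^2 * ((deriv w t)^2 * t) := by ring
      _ ≤ _ := hnum
  have hbwd : ∫ t in m..r0, b1 t ≤ (3*(3*A + A) + 9*ℓ^3*(ℓ*D)) / ℓ^2 := by
    have hmono := intervalIntegral.integral_mono_on (μ := volume) hmr
      (hcb1.intervalIntegrable m r0) (hψc.intervalIntegrable m r0) hbwd_pt
    have hsplit : ∫ t in m..r0, ψ t
        = (3*(3*(∫ t in m..r0, p (t-ℓ)) + (∫ t in m..r0, p t))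
            + 9*ℓ^3*((∫ t in m..r0, G t) - (∫ t in m..r0, G (t-ℓ)))) / ℓ^2 := by
      simp only [hψ]
      rw [intervalIntegral.integral_div]
      congr 1
      rw [intervalIntegral.integral_add (f := fun x => 3 * (3 * p (x - ℓ) + p x)) (g := fun x => 9 * ℓ ^ 3 * (G x - G (x - ℓ)))
          ((continuous_const.mul ((continuous_const.mul hcpml).add hcp)).intervalIntegrable _ _)
          ((continuous_const.mul (hGc.sub hGcml)).intervalIntegrable _ _),
        intervalIntegral.integral_const_mul, intervalIntegral.integral_const_mul,
        intervalIntegral.integral_add (f := fun x => 3 * p (x - ℓ)) (g := p) ((continuous_const.mul hcpml).intervalIntegrable _ _)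
          (hcp.intervalIntegrable _ _),
        intervalIntegral.integral_const_mul,
        intervalIntegral.integral_sub (f := G) (g := fun x => G (x - ℓ)) (hGc.intervalIntegrable _ _)
          (hGcml.intervalIntegrable _ _)]
    have hS1 : ∫ t in m..r0, p (t-ℓ) ≤ A := by
      rw [intervalIntegral.integral_comp_sub_right (fun s => p s) ℓ]
      exact intervalIntegral.integral_mono_interval hmℓ (by linarith) (by linarith) hpae
        (hcp.intervalIntegrable 0 r0)
    have hS2 : ∫ t in m..r0, p t ≤ A :=
      intervalIntegral.integral_mono_interval hm0 hmr le_rfl hpae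
        (hcp.intervalIntegrable 0 r0)
    have hS3 : (∫ t in m..r0, G t) - (∫ t in m..r0, G (t-ℓ)) ≤ ℓ * D := by
      have e3 : ∫ t in m..r0, G t ≤ ℓ * D := by
        have h := intervalIntegral.integral_mono_on (μ := volume) hmr
          (hGc.intervalIntegrable m r0) (_root_.intervalIntegrable_const (c := D))
          (fun x hx => hGle x r0 (le_trans hm0 hx.1) hx.2)
        rw [intervalIntegral.integral_const, smul_eq_mul] at h
        calc ∫ t in m..r0, G t ≤ (r0 - m) * D := h
          _ = ℓ * D := by simp [hm]
      have e4 : 0 ≤ ∫ t in m..r0, G (t-ℓ) := by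
        rw [intervalIntegral.integral_comp_sub_right (fun s => G s) ℓ]
        exact intervalIntegral.integral_nonneg (by linarith)
          (fun u hu => hGnn u (le_trans hmℓ hu.1))
      linarith
    calc ∫ t in m..r0, b1 t ≤ ∫ t in m..r0, ψ t := hmono
      _ = _ := hsplit
      _ ≤ (3*(3*A + A) + 9*ℓ^3*(ℓ*D)) / ℓ^2 := by
          rw [div_le_div_iff₀ (by positivity) (by positivity)]
          have h5 := mul_le_mul_of_nonneg_left hS3 (show (0:ℝ) ≤ 9*ℓ^3 by positivity)
          nlinarith [hS1, hS2, h5]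
  -- ===================== combine =====================
  have hsum : (∫ t in (0:ℝ)..m, b1 t) + (∫ t in m..r0, b1 t) = ∫ t in (0:ℝ)..r0, b1 t :=
    intervalIntegral.integral_add_adjacent_intervals
      (hcb1.intervalIntegrable 0 m) (hcb1.intervalIntegrable m r0)
  have hDval : (∫ t in (0:ℝ)..r0, q t) = D := rfl
  have hfinal : ∫ t in (0:ℝ)..r0, b1 t ≤ 18/ℓ^2 * A + 12*ℓ^2*D := by
    rw [← hsum]
    have heq : (3*(A + A) + 3*ℓ^3*(ℓ*D)) / ℓ^2 + (3*(3*A + A) + 9*ℓ^3*(ℓ*D)) / ℓ^2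
        = 18/ℓ^2 * A + 12*ℓ^2*D := by
      field_simp
      ring
    linarith [hfwd, hbwd]
  calc ∫ t in (0:ℝ)..r0, b1 t ≤ 18/ℓ^2 * A + 12*ℓ^2*D := hfinal
    _ = 18/ℓ^2 * A + 12*ℓ^2 * ∫ t in (0:ℝ)..r0, q t := by rw [hDval]

/-- weighted Gagliardo–Nirenberg interpolation inequality on `(0, r₀)`
with weight `r dr`: `∫ |w'|² r ≤ C (∫ |w|² r)^(1/2) (∫ |w''|² r)^(1/2) + (C/r₀²) ∫ |w|² r`. -/
theorem weighted_interpolation (r0 : ℝ) (hr0 : 0 < r0) :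
    ∃ C : ℝ, 0 < C ∧ ∀ w : ℝ → ℝ, ContDiff ℝ 2 w →
      ∫ r in (0:ℝ)..r0, (deriv w r) ^ 2 * r
        ≤ C * Real.sqrt (∫ r in (0:ℝ)..r0, (w r) ^ 2 * r)
              * Real.sqrt (∫ r in (0:ℝ)..r0, (deriv (deriv w) r) ^ 2 * r)
          + (C / r0 ^ 2) * ∫ r in (0:ℝ)..r0, (w r) ^ 2 * r := by
  refine ⟨300, by norm_num, ?_⟩
  intro w hw
  set A : ℝ := ∫ r in (0:ℝ)..r0, (w r) ^ 2 * r with hA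
  set B : ℝ := ∫ r in (0:ℝ)..r0, (deriv w r) ^ 2 * r with hB
  set D : ℝ := ∫ r in (0:ℝ)..r0, (deriv (deriv w) r) ^ 2 * r with hD
  have hA0 : 0 ≤ A :=
    intervalIntegral.integral_nonneg hr0.le (fun u hu => mul_nonneg (sq_nonneg _) hu.1)
  have hD0 : 0 ≤ D :=
    intervalIntegral.integral_nonneg hr0.le (fun u hu => mul_nonneg (sq_nonneg _) hu.1)
  have hkey : ∀ ℓ : ℝ, 0 < ℓ → 3*ℓ ≤ r0 → B ≤ 18/ℓ^2 * A + 12*ℓ^2 * D :=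
    fun ℓ h1 h2 => key_estimate hw h1 h2
  have hsA0 : 0 ≤ Real.sqrt A := Real.sqrt_nonneg _
  have hsD0 : 0 ≤ Real.sqrt D := Real.sqrt_nonneg _
  rcases eq_or_lt_of_le hA0 with hAz | hApos
  · -- A = 0 case
    rw [← hAz, Real.sqrt_zero]
    have hB0 : B ≤ 0 := by
      by_contra hBc
      push_neg at hBc
      set ℓ : ℝ := min (r0/3) (Real.sqrt B / (5*Real.sqrt (D+1))) with hℓ
      have hsB : 0 < Real.sqrt B := Real.sqrt_pos.mpr hBc
      have hsD1 : 0 < Real.sqrt (D+1) := Real.sqrt_pos.mpr (by linarith)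
      have hℓpos : 0 < ℓ := lt_min (by positivity) (by positivity)
      have h3ℓ : 3*ℓ ≤ r0 := by
        have h := min_le_left (r0/3) (Real.sqrt B / (5*Real.sqrt (D+1)))
        rw [← hℓ] at h; linarith
      have hb := hkey ℓ hℓpos h3ℓ
      rw [← hAz] at hb
      have hb' : B ≤ 12*ℓ^2*D := by
        have h0 : (18:ℝ)/ℓ^2 * 0 = 0 := by ring
        linarith [hb, h0.le]
      have hℓle : ℓ ≤ Real.sqrt B / (5*Real.sqrt (D+1)) := min_le_right _ _
      have hℓsq : ℓ^2 ≤ B / (25*(D+1)) := by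
        have h1 := pow_le_pow_left₀ hℓpos.le hℓle 2
        have h2 : (Real.sqrt B / (5*Real.sqrt (D+1)))^2 = B / (25*(D+1)) := by
          rw [div_pow, mul_pow, Real.sq_sqrt hBc.le,
            Real.sq_sqrt (by linarith : (0:ℝ) ≤ D+1)]
          norm_num
        linarith [h1, h2.le]
      have hfin : 12*ℓ^2*D ≤ (12/25)*B := by
        have hd1 : 0 < D + 1 := by linarith
        have h6 := mul_le_mul_of_nonneg_right hℓsq hD0
        calc 12*ℓ^2*D = 12*(ℓ^2*D) := by ring
          _ ≤ 12*(B/(25*(D+1))*D) := by linarith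
          _ = (12/25)*B*(D/(D+1)) := by field_simp
          _ ≤ (12/25)*B*1 := by
              apply mul_le_mul_of_nonneg_left _ (by positivity)
              rw [div_le_one hd1]; linarith
          _ = (12/25)*B := by ring
      linarith
    have hz : (300:ℝ) * 0 * Real.sqrt D + 300/r0^2*0 = 0 := by ring
    calc B ≤ 0 := hB0
      _ = 300 * 0 * Real.sqrt D + 300/r0^2*0 := hz.symm
      _ = 300 * 0 * Real.sqrt D + 300/r0^2*0 := by ring
  · -- A > 0 case
    rcases le_or_gt (D*r0^4) (81*A) with hc | hc
    · -- take ℓ = r0/3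
      have h := hkey (r0/3) (by positivity) (by linarith)
      have h18 : 18/((r0/3))^2*A = 162/r0^2*A := by
        rw [show (r0/3)^2 = r0^2/9 by ring]
        rw [div_div_eq_mul_div]
        norm_num
      have h12 : 12*(r0/3)^2*D ≤ 108/r0^2*A := by
        rw [div_mul_eq_mul_div, le_div_iff₀ (by positivity : (0:ℝ) < r0^2)]
        nlinarith [hc]
      have h270 : B ≤ 270/r0^2*A := by
        calc B ≤ 18/((r0/3))^2*A + 12*(r0/3)^2*D := h
          _ = 162/r0^2*A + 12*(r0/3)^2*D := by rw [h18]
          _ ≤ 162/r0^2*A + 108/r0^2*A := by linarith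
          _ = 270/r0^2*A := by ring
      have hsplit : (300:ℝ)/r0^2*A = 270/r0^2*A + 30/r0^2*A := by ring
      have h30 : (0:ℝ) ≤ 30/r0^2*A := by positivity
      have hprod : (0:ℝ) ≤ 300*Real.sqrt A*Real.sqrt D := by positivity
      linarith
    · -- take ℓ = (A/D)^(1/4)
      have hDpos : 0 < D := by nlinarith [pow_pos hr0 4]
      have hsa0 : 0 < Real.sqrt A := Real.sqrt_pos.mpr hApos
      have hsd0 : 0 < Real.sqrt D := Real.sqrt_pos.mpr hDpos
      have hAs : Real.sqrt A * Real.sqrt A = A := Real.mul_self_sqrt hA0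
      have hDs : Real.sqrt D * Real.sqrt D = D := Real.mul_self_sqrt hD0
      set x : ℝ := A/D with hx
      have hxpos : 0 < x := div_pos hApos hDpos
      set ℓ : ℝ := Real.sqrt (Real.sqrt x) with hℓ
      have hℓpos : 0 < ℓ := Real.sqrt_pos.mpr (Real.sqrt_pos.mpr hxpos)
      have hℓ2 : ℓ^2 = Real.sqrt x := Real.sq_sqrt (Real.sqrt_nonneg x)
      have hℓ4 : ℓ^4 = x := by
        have h4 : ℓ^4 = (ℓ^2)^2 := by ring
        rw [h4, hℓ2, Real.sq_sqrt hxpos.le]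
      have h3ℓ : 3*ℓ ≤ r0 := by
        have hxlt : x < r0^4/81 := by
          rw [hx, div_lt_div_iff₀ hDpos (by norm_num : (0:ℝ) < 81)]
          linarith
        by_contra hcon
        push_neg at hcon
        have h1 : r0/3 ≤ ℓ := by linarith
        have h2 := pow_le_pow_left₀ (by positivity : (0:ℝ) ≤ r0/3) h1 4
        have h3 : (r0/3)^4 = r0^4/81 := by ring
        rw [h3, hℓ4] at h2
        linarith
      have h := hkey ℓ hℓpos h3ℓ
      have hsx : Real.sqrt x = Real.sqrt A / Real.sqrt D := by
        rw [hx, Real.sqrt_div hA0]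
      have e1 : 18/ℓ^2*A = 18*(Real.sqrt A*Real.sqrt D) := by
        rw [hℓ2, hsx, div_div_eq_mul_div, div_mul_eq_mul_div, eq_comm]
        rw [eq_div_iff hsa0.ne']
        linear_combination 18*Real.sqrt D*hAs
      have e2 : 12*ℓ^2*D = 12*(Real.sqrt A*Real.sqrt D) := by
        rw [hℓ2, hsx]
        rw [eq_comm, mul_comm (12:ℝ) (Real.sqrt A / Real.sqrt D),
          div_mul_eq_mul_div, div_mul_eq_mul_div, eq_comm]
        rw [div_eq_iff hsd0.ne']
        linear_combination (-12)*Real.sqrt A*hDs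
      have h300 : (0:ℝ) ≤ 300/r0^2*A := by positivity
      have hsum : 18*(Real.sqrt A*Real.sqrt D) + 12*(Real.sqrt A*Real.sqrt D)
          = 30*(Real.sqrt A*Real.sqrt D) := by ring
      have hle : 30*(Real.sqrt A*Real.sqrt D) ≤ 300*Real.sqrt A*Real.sqrt D := by
        nlinarith [mul_nonneg hsA0 hsD0]
      linarith
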